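/- Let X be the dual of a Banach space Y, j : X → (-∞,∞] proper, x ∈ dom(j), g ∈ ∂j(x). Suppose j is Hadamard directionally differentiable at x and strongly twice epi-differentiable at x for g (recovery sequences converge strongly). Then for every z in the reduced critical cone K := { z : Q(z) < ∞ }, the directional derivative satisfies j'(x; z) = ⟨g, z⟩. -/

import Mathlib

open Filter Topology

variable {Y : Type*} [NormedAddCommGroup Y] [NormedSpace ℝ Y] [CompleteSpace Y]

/-- Second-order difference quotient of `j` at `x` for `g` with step `t` and direction `w`. -/
noncomputable def secondQuot (j : StrongDual ℝ Y → EReal) (x : StrongDual ℝ Y)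
    (g : Y) (t : ℝ) (w : StrongDual ℝ Y) : EReal :=
  ((2 / t ^ 2 : ℝ) : EReal) * (j (x + t • w) - j x - ((t * w g : ℝ) : EReal))

/-- Weak-* convergence of a sequence in the dual of `Y`. -/
def WeakStarTendsto (z : ℕ → StrongDual ℝ Y) (z₀ : StrongDual ℝ Y) : Prop :=
  ∀ y : Y, Tendsto (fun n => z n y) atTop (nhds (z₀ y))

/-- The weak-* second subderivative of `j` at `x` for `g`. -/
noncomputable def Qsub (j : StrongDual ℝ Y → EReal) (x : StrongDual ℝ Y) (g : Y)
    (z : StrongDual ℝ Y) : EReal :=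
  sInf { L | ∃ (t : ℕ → ℝ) (zs : ℕ → StrongDual ℝ Y),
      (∀ n, 0 < t n) ∧ Tendsto t atTop (nhds 0) ∧ WeakStarTendsto zs z ∧
      L = Filter.liminf (fun n => secondQuot j x g (t n) (zs n)) atTop }

lemma secondQuot_nonneg (j : StrongDual ℝ Y → EReal) (x : StrongDual ℝ Y)
    (g : Y) (hbot : ∀ u, j u ≠ ⊥) (hx : j x ≠ ⊤)
    (hg : ∀ z : StrongDual ℝ Y, j x + (((z - x) g : ℝ) : EReal) ≤ j z)
    {t : ℝ} (ht : 0 < t) (w : StrongDual ℝ Y) :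
    0 ≤ secondQuot j x g t w := by
  lift j x to ℝ using ⟨hx, hbot x⟩ with a ha
  have hle := hg (x + t • w)
  rw [add_sub_cancel_left] at hle
  have hc : (0:ℝ) < 2 / t ^ 2 := by positivity
  simp only [ContinuousLinearMap.smul_apply, smul_eq_mul] at hle
  rcases eq_or_ne (j (x + t • w)) ⊤ with hv | hv
  · rw [secondQuot, hv, ← ha]
    rw [show (⊤ : EReal) - (a:EReal) - ((t * w g : ℝ):EReal) = ⊤ by
      rw [EReal.top_sub_coe, EReal.top_sub_coe]]
    rw [EReal.coe_mul_top_of_pos hc]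
    exact le_top
  · lift j (x + t • w) to ℝ using ⟨hv, hbot _⟩ with b hb
    rw [secondQuot, ← ha, ← hb]
    rw [← EReal.coe_sub, ← EReal.coe_sub, ← EReal.coe_mul]
    have : a + t * w g ≤ b := by exact_mod_cast hle
    have : (0:ℝ) ≤ 2 / t ^ 2 * (b - a - t * w g) := by nlinarith
    exact_mod_cast this

lemma secondQuot_ne_top (j : StrongDual ℝ Y → EReal) (x : StrongDual ℝ Y)
    (g : Y) (hbot : ∀ u, j u ≠ ⊥) (hx : j x ≠ ⊤)
    {t : ℝ} (ht : 0 < t) (w : StrongDual ℝ Y)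
    (h : secondQuot j x g t w ≠ ⊤) : j (x + t • w) ≠ ⊤ := by
  intro hv
  apply h
  lift j x to ℝ using ⟨hx, hbot x⟩ with a ha
  have hc : (0:ℝ) < 2 / t ^ 2 := by positivity
  rw [secondQuot, hv, ← ha]
  rw [show (⊤ : EReal) - (a:EReal) - ((t * w g : ℝ):EReal) = ⊤ by
    rw [EReal.top_sub_coe, EReal.top_sub_coe]]
  exact EReal.coe_mul_top_of_pos hc


theorem dirDeriv_eq_pairing_on_reduced_critical_cone (j : StrongDual ℝ Y → EReal)
    (hbot : ∀ u, j u ≠ ⊥) (hproper : ∃ u, j u ≠ ⊤)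
    (x : StrongDual ℝ Y) (hx : j x ≠ ⊤) (g : Y)
    (hg : ∀ z : StrongDual ℝ Y, j x + (((z - x) g : ℝ) : EReal) ≤ j z)
    (j' : StrongDual ℝ Y → ℝ)
    (hHadamard : ∀ z : StrongDual ℝ Y, ∀ t : ℕ → ℝ, ∀ w : ℕ → StrongDual ℝ Y,
      (∀ n, 0 < t n) → Tendsto t atTop (nhds 0) → Tendsto w atTop (nhds z) →
      Tendsto (fun n => ((1 / t n : ℝ) : EReal) * (j (x + t n • w n) - j x)) atTop
        (nhds ((j' z : ℝ) : EReal)))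
    (hepi : ∀ z : StrongDual ℝ Y, ∀ t : ℕ → ℝ, (∀ n, 0 < t n) →
      Tendsto t atTop (nhds 0) →
      ∃ zs : ℕ → StrongDual ℝ Y, Tendsto zs atTop (nhds z) ∧
        Tendsto (fun n => secondQuot j x g (t n) (zs n)) atTop (nhds (Qsub j x g z))) :
    ∀ z : StrongDual ℝ Y, Qsub j x g z ≠ ⊤ → j' z = z g := by
  intro z hQtop
  obtain ⟨a, ha⟩ : ∃ a : ℝ, j x = (a : EReal) :=
    ⟨(j x).toReal, (EReal.coe_toReal hx (hbot x)).symm⟩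
  set t : ℕ → ℝ := fun n => 1 / (n + 1) with ht_def
  have ht0 : ∀ n, 0 < t n := fun n => by positivity
  have htlim : Tendsto t atTop (nhds 0) := tendsto_one_div_add_atTop_nhds_zero_nat
  obtain ⟨zs, hzs, hlim⟩ := hepi z t ht0 htlim
  -- Q is nonnegative, hence a finite real number
  have hQ0 : 0 ≤ Qsub j x g z := by
    apply le_sInf
    rintro L ⟨t', zs', ht', -, -, rfl⟩
    exact le_liminf_of_le (by isBoundedDefault) (Eventually.of_forall fun n =>
      secondQuot_nonneg j x g hbot hx hg (ht' n) (zs' n))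
  have hQbot : Qsub j x g z ≠ ⊥ := fun h => by simp [h] at hQ0
  obtain ⟨q, hq⟩ : ∃ q : ℝ, Qsub j x g z = (q : EReal) :=
    ⟨(Qsub j x g z).toReal, (EReal.coe_toReal hQtop hQbot).symm⟩
  rw [hq] at hlim
  -- eventually the second quotient is finite
  have hev : ∀ᶠ n in atTop, secondQuot j x g (t n) (zs n) ≠ ⊤ := by
    filter_upwards [Tendsto.eventually_lt_const (show (q:EReal) < ⊤ from EReal.coe_lt_top q) hlim]
      with n hn using hn.ne
  have hnb : ∀ n, secondQuot j x g (t n) (zs n) ≠ ⊥ := by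
    intro n h
    have h0 := secondQuot_nonneg j x g hbot hx hg (ht0 n) (zs n)
    rw [h] at h0
    simp at h0
  set s : ℕ → ℝ := fun n => (secondQuot j x g (t n) (zs n)).toReal with hs_def
  -- real-valued identity for the first-order quotient
  have hkey : (fun n => ((1 / t n : ℝ) : EReal) * (j (x + t n • zs n) - j x))
      =ᶠ[atTop] (fun n => ((zs n g + (t n / 2) * s n : ℝ) : EReal)) := by
    filter_upwards [hev] with n hn
    obtain ⟨b, hb⟩ : ∃ b : ℝ, j (x + t n • zs n) = (b : EReal) :=
      ⟨(j (x + t n • zs n)).toReal,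
        (EReal.coe_toReal (secondQuot_ne_top j x g hbot hx (ht0 n) (zs n) hn) (hbot _)).symm⟩
    have hsq : secondQuot j x g (t n) (zs n)
        = ((2 / (t n) ^ 2 * (b - a - t n * zs n g) : ℝ) : EReal) := by
      rw [secondQuot, ha, hb, ← EReal.coe_sub, ← EReal.coe_sub, ← EReal.coe_mul]
    have hsn : s n = 2 / (t n) ^ 2 * (b - a - t n * zs n g) := by
      show (secondQuot j x g (t n) (zs n)).toReal = _
      rw [hsq, EReal.toReal_coe]
    rw [ha, hb, ← EReal.coe_sub, ← EReal.coe_mul, EReal.coe_eq_coe_iff, hsn]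
    have htne : t n ≠ 0 := (ht0 n).ne'
    field_simp
    ring
  -- s converges to q
  have hsq : Tendsto s atTop (nhds q) := by
    rw [← EReal.tendsto_coe]
    refine Tendsto.congr' ?_ hlim
    filter_upwards [hev] with n hn
    exact (EReal.coe_toReal hn (hnb n)).symm
  -- zs n g → z g
  have hzg : Tendsto (fun n => zs n g) atTop (nhds (z g)) := by
    have hc : Continuous fun φ : StrongDual ℝ Y => φ g :=
      continuous_id.clm_apply continuous_const
    exact (hc.tendsto z).comp hzs
  -- the real quotient converges to z g
  have hreal : Tendsto (fun n => zs n g + (t n / 2) * s n) atTop (nhds (z g)) := by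
    have h2 : Tendsto (fun n => (t n / 2) * s n) atTop (nhds 0) := by
      have := (htlim.div_const 2).mul hsq
      simpa using this
    simpa using hzg.add h2
  have hH := hHadamard z t zs ht0 htlim hzs
  have hH' : Tendsto (fun n => ((1 / t n : ℝ) : EReal) * (j (x + t n • zs n) - j x)) atTop
      (nhds ((z g : ℝ) : EReal)) := by
    refine Tendsto.congr' hkey.symm ?_
    rw [EReal.tendsto_coe]
    exact hreal
  have := tendsto_nhds_unique hH hH'
  exact_mod_cast this
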